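/- Let S be a set of n points in the plane in general position, and suppose some subset of h points of S is in convex position. Then S admits at least ⌊h/2⌋ pairwise edge-disjoint plane spanning trees. -/

import Mathlib

/-- Points in the plane. -/
abbrev Pt : Type := ℝ × ℝ

/-- A finite point set is in general position if no three of its points are collinear. -/
def GenPos (S : Finset Pt) : Prop :=
  ∀ p ∈ S, ∀ q ∈ S, ∀ r ∈ S, p ≠ q → p ≠ r → q ≠ r →
    ¬ Collinear ℝ ({p, q, r} : Set Pt)

/-- A geometric graph on `S` (a simple graph on the points of `S`, edges drawn as
straight segments) is plane if the open segments of any two distinct edges are disjoint. -/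
def IsPlaneGraph {S : Finset Pt} (G : SimpleGraph {x // x ∈ S}) : Prop :=
  ∀ a b c d : {x // x ∈ S}, G.Adj a b → G.Adj c d → s(a, b) ≠ s(c, d) →
    openSegment ℝ (a : Pt) (b : Pt) ∩ openSegment ℝ (c : Pt) (d : Pt) = ∅

/-- A plane spanning tree of `S`: a tree on all points of `S` drawn without crossings. -/
def IsPlaneSpanningTree {S : Finset Pt} (G : SimpleGraph {x // x ∈ S}) : Prop :=
  G.IsTree ∧ IsPlaneGraph G

/-- A plane spanning path of `S`: a plane spanning tree in which every vertex
has degree at most two (i.e. a plane Hamiltonian path). -/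
def IsPlaneSpanningPath {S : Finset Pt} (G : SimpleGraph {x // x ∈ S}) : Prop :=
  IsPlaneSpanningTree G ∧
    ∀ v a b c : {x // x ∈ S}, G.Adj v a → G.Adj v b → G.Adj v c →
      (a = b ∨ a = c ∨ b = c)

/-- The open segment spanned by an unordered pair of points. -/
def segOpen (e : Sym2 Pt) : Set Pt :=
  Sym2.lift ⟨fun a b => openSegment ℝ a b, fun a b => openSegment_symm ℝ a b⟩ e

/-- `F` is a crossing family in `S`: a set of nondegenerate segments with endpoints
in `S`, any two of which cross (their open segments intersect). -/
def IsCrossingFamily (S : Finset Pt) (F : Finset (Sym2 Pt)) : Prop :=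
  (∀ e ∈ F, ¬ e.IsDiag ∧ ∀ x ∈ e, x ∈ S) ∧
  (∀ e ∈ F, ∀ f ∈ F, e ≠ f → (segOpen e ∩ segOpen f).Nonempty)

/-- `x` lies strictly to the left of the directed line from `p` to `q`. -/
def leftOf (p q x : Pt) : Prop :=
  0 < (q.1 - p.1) * (x.2 - p.2) - (q.2 - p.2) * (x.1 - p.1)

/-- `x` lies strictly to the right of the directed line from `p` to `q`. -/
def rightOf (p q x : Pt) : Prop :=
  (q.1 - p.1) * (x.2 - p.2) - (q.2 - p.2) * (x.1 - p.1) < 0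

/-- The double star on `S` associated with the directed edge `pq`: the edge `pq`,
the edges from `p` to all points strictly left of the directed line `pq`, and the
edges from `q` to all points strictly right of it. -/
def doubleStar (S : Finset Pt) (p q : Pt) : SimpleGraph {x // x ∈ S} :=
  SimpleGraph.fromRel fun a b =>
    ((a : Pt) = p ∧ (b : Pt) = q) ∨
    ((a : Pt) = p ∧ leftOf p q (b : Pt)) ∨
    ((a : Pt) = q ∧ rightOf p q (b : Pt))

/-- The regular wheel configuration `W_{2n}`: `2n-1` points regularly spaced on the
unit circle together with its center. -/
noncomputable def wheel (n : ℕ) : Finset Pt :=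
  insert ((0 : ℝ), (0 : ℝ)) <| (Finset.range (2 * n - 1)).image fun j : ℕ =>
    (Real.cos (2 * Real.pi * (j : ℝ) / ((2 * n - 1 : ℕ) : ℝ)),
     Real.sin (2 * Real.pi * (j : ℝ) / ((2 * n - 1 : ℕ) : ℝ)))

noncomputable section

def cross (p q x : Pt) : ℝ := (q.1 - p.1) * (x.2 - p.2) - (q.2 - p.2) * (x.1 - p.1)

lemma leftOf_iff {p q x : Pt} : leftOf p q x ↔ 0 < cross p q x := Iff.rfl
lemma rightOf_iff {p q x : Pt} : rightOf p q x ↔ cross p q x < 0 := Iff.rfl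

lemma cross_swap (p q x : Pt) : cross p x q = - cross p q x := by
  simp only [cross]; ring

lemma cross_cyclic (p q x : Pt) : cross p q x = cross q x p := by
  simp only [cross]; ring

@[simp] lemma cross_self_mid (p q : Pt) : cross p q p = 0 := by simp only [cross]; ring

@[simp] lemma cross_self_right (p q : Pt) : cross p q q = 0 := by simp only [cross]; ring

lemma collinear_of_cross_eq_zero {p q x : Pt} (hpq : p ≠ q) (h : cross p q x = 0) :
    Collinear ℝ ({p, q, x} : Set Pt) := by
  have key : ∃ t : ℝ, x = t • (q - p) + p := by
    rcases eq_or_ne q.1 p.1 with h1 | h1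
    · have h2 : q.2 - p.2 ≠ 0 := fun h2 => hpq (Prod.ext h1 (by linarith)).symm
      have hx1 : x.1 = p.1 := by
        simp only [cross, h1] at h
        have : (q.2 - p.2) * (x.1 - p.1) = 0 := by linarith
        rcases mul_eq_zero.mp this with h' | h'
        · exact absurd h' h2
        · linarith
      refine ⟨(x.2 - p.2) / (q.2 - p.2), Prod.ext ?_ ?_⟩ <;>
        simp only [Prod.smul_fst, Prod.smul_snd, Prod.fst_add, Prod.snd_add, Prod.fst_sub,
          Prod.snd_sub, smul_eq_mul]
      · field_simp
        rw [h1, hx1]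
        ring
      · field_simp
        ring
    · have h1' : q.1 - p.1 ≠ 0 := sub_ne_zero.mpr h1
      refine ⟨(x.1 - p.1) / (q.1 - p.1), Prod.ext ?_ ?_⟩ <;>
        simp only [Prod.smul_fst, Prod.smul_snd, Prod.fst_add, Prod.snd_add, Prod.fst_sub,
          Prod.snd_sub, smul_eq_mul] <;> field_simp <;> simp only [cross] at h <;> ring_nf <;>
        nlinarith [h]
  obtain ⟨t, ht⟩ := key
  apply (collinear_iff_of_mem (Set.mem_insert p _)).2
  refine ⟨q - p, ?_⟩
  rintro w (rfl | rfl | rfl)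
  · exact ⟨0, by simp⟩
  · refine ⟨1, ?_⟩
    simp only [one_smul, vadd_eq_add]
    abel
  · exact ⟨t, ht⟩

lemma genpos_cross_ne {S : Finset Pt} (hgp : GenPos S) {p q x : Pt} (hp : p ∈ S) (hq : q ∈ S)
    (hx : x ∈ S) (hpq : p ≠ q) (hpx : p ≠ x) (hqx : q ≠ x) : cross p q x ≠ 0 :=
  fun h => hgp p hp q hq x hx hpq hpx hqx (collinear_of_cross_eq_zero hpq h)

lemma cross_combo {p q a b : Pt} {u v : ℝ} (h : u + v = 1) :
    cross p q (u • a + v • b) = u * cross p q a + v * cross p q b := by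
  have hv : v = 1 - u := by linarith
  subst hv
  simp only [cross, Prod.smul_fst, Prod.smul_snd, Prod.fst_add, Prod.snd_add, smul_eq_mul]
  ring

/-- value of `cross p q` on points of an open segment. -/
lemma cross_mem_openSegment {p q a b : Pt} {z : Pt} (hz : z ∈ openSegment ℝ a b) :
    ∃ u v : ℝ, 0 < u ∧ 0 < v ∧ u + v = 1 ∧ cross p q z = u * cross p q a + v * cross p q b := by
  obtain ⟨u, v, hu, hv, huv, hz⟩ := hz
  exact ⟨u, v, hu, hv, huv, by rw [← hz, cross_combo huv]⟩

lemma openSegment_same_endpoint {a b c : Pt} (h : cross a b c ≠ 0) :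
    openSegment ℝ a b ∩ openSegment ℝ a c = ∅ := by
  rw [Set.eq_empty_iff_forall_notMem]
  rintro z ⟨⟨u1, v1, hu1, hv1, huv1, hz1⟩, ⟨u2, v2, hu2, hv2, huv2, hz2⟩⟩
  apply h
  have hzz : u1 • a + v1 • b = u2 • a + v2 • c := by rw [hz1, hz2]
  have e1 : u1 * a.1 + v1 * b.1 = u2 * a.1 + v2 * c.1 := congrArg Prod.fst hzz
  have e2 : u1 * a.2 + v1 * b.2 = u2 * a.2 + v2 * c.2 := congrArg Prod.snd hzz
  have e1' : v1 * (b.1 - a.1) = v2 * (c.1 - a.1) := by linear_combination e1 + a.1 * (huv2 - huv1)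
  have e2' : v1 * (b.2 - a.2) = v2 * (c.2 - a.2) := by linear_combination e2 + a.2 * (huv2 - huv1)
  have key : cross a b c * (v1 * v2) = 0 := by
    simp only [cross]
    linear_combination (v2 * (c.2 - a.2)) * e1' - (v2 * (c.1 - a.1)) * e2'
  rcases mul_eq_zero.mp key with h' | h'
  · exact h'
  · nlinarith
section DS

variable {S : Finset Pt} {p q : Pt} (hp : p ∈ S) (hq : q ∈ S)

local notation "V" => {x // x ∈ S}

lemma not_leftOf_self_p : ¬ leftOf p q p := by simp [leftOf_iff, cross_self_mid]
lemma not_leftOf_self_q : ¬ leftOf p q q := by simp [leftOf_iff, cross_self_right]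
lemma not_rightOf_self_p : ¬ rightOf p q p := by simp [rightOf_iff, cross_self_mid]
lemma not_rightOf_self_q : ¬ rightOf p q q := by simp [rightOf_iff, cross_self_right]

lemma leftOf_ne_p {x : Pt} (h : leftOf p q x) : x ≠ p := by
  rintro rfl; exact not_leftOf_self_p h
lemma leftOf_ne_q {x : Pt} (h : leftOf p q x) : x ≠ q := by
  rintro rfl; exact not_leftOf_self_q h
lemma rightOf_ne_p {x : Pt} (h : rightOf p q x) : x ≠ p := by
  rintro rfl; exact not_rightOf_self_p h
lemma rightOf_ne_q {x : Pt} (h : rightOf p q x) : x ≠ q := by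
  rintro rfl; exact not_rightOf_self_q h
lemma not_left_and_right {x : Pt} (h : leftOf p q x) (h' : rightOf p q x) : False := by
  rw [leftOf_iff] at h; rw [rightOf_iff] at h'; linarith

lemma doubleStar_adj_cases {a b : V} (h : (doubleStar S p q).Adj a b) :
    s(a, b) = s((⟨p, hp⟩ : V), (⟨q, hq⟩ : V)) ∨
    (∃ X : V, leftOf p q ↑X ∧ s(a, b) = s((⟨p, hp⟩ : V), X)) ∨
    (∃ Y : V, rightOf p q ↑Y ∧ s(a, b) = s((⟨q, hq⟩ : V), Y)) := by
  rw [doubleStar, SimpleGraph.fromRel_adj] at h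
  obtain ⟨hne, h | h⟩ := h
  · rcases h with ⟨h1, h2⟩ | ⟨h1, h2⟩ | ⟨h1, h2⟩
    · exact Or.inl (by rw [show a = ⟨p, hp⟩ from Subtype.ext h1, show b = ⟨q, hq⟩ from Subtype.ext h2])
    · exact Or.inr (Or.inl ⟨b, h2, by rw [show a = ⟨p, hp⟩ from Subtype.ext h1]⟩)
    · exact Or.inr (Or.inr ⟨b, h2, by rw [show a = ⟨q, hq⟩ from Subtype.ext h1]⟩)
  · rcases h with ⟨h1, h2⟩ | ⟨h1, h2⟩ | ⟨h1, h2⟩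
    · exact Or.inl (by rw [show b = ⟨p, hp⟩ from Subtype.ext h1, show a = ⟨q, hq⟩ from Subtype.ext h2, Sym2.eq_swap])
    · exact Or.inr (Or.inl ⟨a, h2, by rw [show b = ⟨p, hp⟩ from Subtype.ext h1, Sym2.eq_swap]⟩)
    · exact Or.inr (Or.inr ⟨a, h2, by rw [show b = ⟨q, hq⟩ from Subtype.ext h1, Sym2.eq_swap]⟩)

lemma seg_of_sym2_eq {a b c d : V} (h : s(a, b) = s(c, d)) :
    openSegment ℝ (a : Pt) (b : Pt) = openSegment ℝ (c : Pt) (d : Pt) := by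
  rw [Sym2.eq_iff] at h
  rcases h with ⟨rfl, rfl⟩ | ⟨rfl, rfl⟩
  · rfl
  · exact openSegment_symm ℝ _ _

lemma doubleStar_adj_PQ (hpq : p ≠ q) : (doubleStar S p q).Adj ⟨p, hp⟩ ⟨q, hq⟩ := by
  rw [doubleStar, SimpleGraph.fromRel_adj]
  exact ⟨fun h => hpq (congrArg Subtype.val h), Or.inl (Or.inl ⟨rfl, rfl⟩)⟩

lemma doubleStar_adj_left {X : V} (hX : leftOf p q ↑X) : (doubleStar S p q).Adj ⟨p, hp⟩ X := by
  rw [doubleStar, SimpleGraph.fromRel_adj]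
  exact ⟨fun h => (leftOf_ne_p hX) (congrArg Subtype.val h).symm, Or.inl (Or.inr (Or.inl ⟨rfl, hX⟩))⟩

lemma doubleStar_adj_right {Y : V} (hY : rightOf p q ↑Y) : (doubleStar S p q).Adj ⟨q, hq⟩ Y := by
  rw [doubleStar, SimpleGraph.fromRel_adj]
  exact ⟨fun h => (rightOf_ne_q hY) (congrArg Subtype.val h).symm, Or.inl (Or.inr (Or.inr ⟨rfl, hY⟩))⟩

end DS

section DS2

variable {S : Finset Pt} {p q : Pt}

local notation "V" => {x // x ∈ S}

/-- open segment from `p` to a left point stays strictly left. -/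
lemma openSegment_left_pos {x z : Pt} (hx : leftOf p q x) (hz : z ∈ openSegment ℝ p x) :
    0 < cross p q z := by
  obtain ⟨u, v, hu, hv, huv, he⟩ := cross_mem_openSegment (p := p) (q := q) hz
  rw [he, cross_self_mid]
  rw [leftOf_iff] at hx
  nlinarith

lemma openSegment_right_neg {y z : Pt} (hy : rightOf p q y) (hz : z ∈ openSegment ℝ q y) :
    cross p q z < 0 := by
  obtain ⟨u, v, hu, hv, huv, he⟩ := cross_mem_openSegment (p := p) (q := q) hz
  rw [he, cross_self_right]
  rw [rightOf_iff] at hy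
  nlinarith

lemma openSegment_pq_zero {z : Pt} (hz : z ∈ openSegment ℝ p q) : cross p q z = 0 := by
  obtain ⟨u, v, hu, hv, huv, he⟩ := cross_mem_openSegment (p := p) (q := q) hz
  rw [he, cross_self_mid, cross_self_right]
  ring

lemma doubleStar_plane (hp : p ∈ S) (hq : q ∈ S) (hpq : p ≠ q) (hgp : GenPos S) :
    IsPlaneGraph (doubleStar S p q) := by
  intro a b c d hab hcd hne
  have hab' := doubleStar_adj_cases hp hq hab
  have hcd' := doubleStar_adj_cases hp hq hcd
  -- disjointness by signs
  have signdisj : ∀ A B : Set Pt, (∀ z ∈ A, 0 < cross p q z) → (∀ z ∈ B, ¬ 0 < cross p q z) →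
      A ∩ B = ∅ := by
    intro A B h1 h2
    rw [Set.eq_empty_iff_forall_notMem]
    rintro z ⟨za, zb⟩
    exact h2 z zb (h1 z za)
  rcases hab' with h1 | ⟨X, hX, h1⟩ | ⟨Y, hY, h1⟩ <;>
    rcases hcd' with h2 | ⟨X', hX', h2⟩ | ⟨Y', hY', h2⟩ <;>
    rw [seg_of_sym2_eq h1, seg_of_sym2_eq h2]
  · exact absurd (h1.trans h2.symm) hne
  · -- pq vs p-x' : shared endpoint p
    apply openSegment_same_endpoint
    rw [leftOf_iff] at hX'
    intro h; linarith
  · -- pq vs q-y' : shared endpoint q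
    rw [openSegment_symm]
    apply openSegment_same_endpoint
    have : cross q p ↑Y' = - cross p q ↑Y' := by simp only [cross]; ring
    rw [rightOf_iff] at hY'
    rw [this]; intro h'; linarith
  · -- p-x vs pq
    rw [Set.inter_comm]
    exact openSegment_same_endpoint (by rw [leftOf_iff] at hX; intro h; linarith)
  · -- p-x vs p-x'
    have hXX' : (X : Pt) ≠ (X' : Pt) := by
      intro h
      have hXe : X = X' := Subtype.ext h
      rw [← hXe] at h2
      exact hne (h1.trans h2.symm)
    apply openSegment_same_endpoint
    exact genpos_cross_ne hgp hp X.2 X'.2 (Ne.symm (leftOf_ne_p hX)) (Ne.symm (leftOf_ne_p hX')) hXX'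
  · -- p-x vs q-y'
    apply signdisj
    · exact fun z hz => openSegment_left_pos hX hz
    · exact fun z hz => not_lt.2 (le_of_lt (openSegment_right_neg hY' hz))
  · -- q-y vs pq
    rw [Set.inter_comm, openSegment_symm]
    apply openSegment_same_endpoint
    have : cross q p ↑Y = - cross p q ↑Y := by simp only [cross]; ring
    rw [rightOf_iff] at hY
    rw [this]; intro h'; linarith
  · -- q-y vs p-x'
    rw [Set.inter_comm]
    apply signdisj
    · exact fun z hz => openSegment_left_pos hX' hz
    · exact fun z hz => not_lt.2 (le_of_lt (openSegment_right_neg hY hz))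
  · -- q-y vs q-y'
    have hYY' : (Y : Pt) ≠ (Y' : Pt) := by
      intro h
      have hYe : Y = Y' := Subtype.ext h
      rw [← hYe] at h2
      exact hne (h1.trans h2.symm)
    apply openSegment_same_endpoint
    have h1' : cross q ↑Y ↑Y' ≠ 0 :=
      genpos_cross_ne hgp hq Y.2 Y'.2 (Ne.symm (rightOf_ne_q hY)) (Ne.symm (rightOf_ne_q hY')) hYY'
    exact h1'

end DS2

section DS3

variable {S : Finset Pt} {p q : Pt}

local notation "V" => {x // x ∈ S}

lemma reach_invariant {W : Type*} {G : SimpleGraph W} {R : W → Prop}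
    (h : ∀ a b, G.Adj a b → (R a ↔ R b)) {u w : W} (hr : G.Reachable u w) : R u ↔ R w := by
  obtain ⟨wk⟩ := hr
  induction wk with
  | nil => rfl
  | cons ha _ ih => exact (h _ _ ha).trans ih

lemma doubleStar_connected (hp : p ∈ S) (hq : q ∈ S) (hpq : p ≠ q) (hgp : GenPos S) :
    (doubleStar S p q).Connected := by
  have hreach : ∀ u : V, (doubleStar S p q).Reachable ⟨p, hp⟩ u := by
    intro u
    by_cases hup : (u : Pt) = p
    · rw [show u = ⟨p, hp⟩ from Subtype.ext hup]
    · by_cases huq : (u : Pt) = q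
      · rw [show u = ⟨q, hq⟩ from Subtype.ext huq]
        exact (doubleStar_adj_PQ hp hq hpq).reachable
      · have hcr : cross p q ↑u ≠ 0 :=
          genpos_cross_ne hgp hp hq u.2 hpq (Ne.symm hup) (Ne.symm huq)
        rcases lt_or_gt_of_ne hcr with hneg | hpos
        · exact ((doubleStar_adj_PQ hp hq hpq).reachable).trans
            (doubleStar_adj_right hq (rightOf_iff.2 hneg)).reachable
        · exact (doubleStar_adj_left hp (leftOf_iff.2 hpos)).reachable
  haveI : Nonempty {x // x ∈ S} := ⟨⟨p, hp⟩⟩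
  exact SimpleGraph.Connected.mk fun u w => (hreach u).symm.trans (hreach w)

lemma doubleStar_unique_nbr_left (hp : p ∈ S) (hq : q ∈ S) {X a : V} (hX : leftOf p q ↑X)
    (ha : (doubleStar S p q).Adj a X) : a = ⟨p, hp⟩ := by
  rcases doubleStar_adj_cases hp hq ha with h | ⟨X', hX', h⟩ | ⟨Y', hY', h⟩ <;>
      rw [Sym2.eq_iff] at h
  · rcases h with ⟨ha1, hX1⟩ | ⟨ha1, hX1⟩
    · exact absurd (congrArg Subtype.val hX1) (leftOf_ne_q hX)
    · exact absurd (congrArg Subtype.val hX1) (leftOf_ne_p hX)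
  · rcases h with ⟨ha1, hX1⟩ | ⟨ha1, hX1⟩
    · exact ha1
    · exact absurd (congrArg Subtype.val hX1) (leftOf_ne_p hX)
  · rcases h with ⟨ha1, hX1⟩ | ⟨ha1, hX1⟩
    · rw [hX1] at hX; exact absurd hX (fun h' => not_left_and_right h' hY')
    · exact absurd (congrArg Subtype.val hX1) (leftOf_ne_q hX)

lemma doubleStar_unique_nbr_right (hp : p ∈ S) (hq : q ∈ S) {Y a : V} (hY : rightOf p q ↑Y)
    (ha : (doubleStar S p q).Adj a Y) : a = ⟨q, hq⟩ := by
  rcases doubleStar_adj_cases hp hq ha with h | ⟨X', hX', h⟩ | ⟨Y', hY', h⟩ <;>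
      rw [Sym2.eq_iff] at h
  · rcases h with ⟨ha1, hY1⟩ | ⟨ha1, hY1⟩
    · exact absurd (congrArg Subtype.val hY1) (rightOf_ne_q hY)
    · exact absurd (congrArg Subtype.val hY1) (rightOf_ne_p hY)
  · rcases h with ⟨ha1, hY1⟩ | ⟨ha1, hY1⟩
    · rw [hY1] at hY; exact absurd hX' (fun h' => not_left_and_right h' hY)
    · exact absurd (congrArg Subtype.val hY1) (rightOf_ne_p hY)
  · rcases h with ⟨ha1, hY1⟩ | ⟨ha1, hY1⟩
    · exact ha1
    · exact absurd (congrArg Subtype.val hY1) (rightOf_ne_q hY)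

lemma doubleStar_acyclic (hp : p ∈ S) (hq : q ∈ S) (hpq : p ≠ q) (hgp : GenPos S) :
    (doubleStar S p q).IsAcyclic := by
  rw [SimpleGraph.isAcyclic_iff_forall_adj_isBridge]
  intro v w hvw
  rw [SimpleGraph.isBridge_iff]
  set G' := doubleStar S p q \ SimpleGraph.fromEdgeSet {s(v, w)} with hG'
  have hG'le : ∀ a b : V, G'.Adj a b → (doubleStar S p q).Adj a b ∧ s(a, b) ≠ s(v, w) := by
    intro a b hab
    rw [hG', SimpleGraph.sdiff_adj, SimpleGraph.fromEdgeSet_adj] at hab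
    exact ⟨hab.1, fun h => hab.2 ⟨Set.mem_singleton_iff.2 h, hab.1.ne⟩⟩
  rcases doubleStar_adj_cases hp hq hvw with h | ⟨X, hX, h⟩ | ⟨Y, hY, h⟩
  · -- edge pq removed : R := coe = p ∨ leftOf
    intro hr
    have hinv : ∀ a b : V, G'.Adj a b → (((a : Pt) = p ∨ leftOf p q ↑a) ↔ ((b : Pt) = p ∨ leftOf p q ↑b)) := by
      intro a b hab
      obtain ⟨hab, hne⟩ := hG'le a b hab
      have hne' : s(a, b) ≠ s((⟨p, hp⟩ : V), (⟨q, hq⟩ : V)) := h ▸ hne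
      rcases doubleStar_adj_cases hp hq hab with h2 | ⟨X', hX', h2⟩ | ⟨Y', hY', h2⟩
      · exact absurd h2 hne'
      · rw [Sym2.eq_iff] at h2
        have hor : ((a : Pt) = p ∧ (b : Pt) = ↑X') ∨ ((a : Pt) = ↑X' ∧ (b : Pt) = p) := by
          rcases h2 with ⟨h3, h4⟩ | ⟨h3, h4⟩
          · exact Or.inl ⟨congrArg Subtype.val h3, congrArg Subtype.val h4⟩
          · exact Or.inr ⟨congrArg Subtype.val h3, congrArg Subtype.val h4⟩
        have hX'ok : ∀ z : Pt, z = ↑X' → (z = p ∨ leftOf p q z) := by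
          rintro z rfl
          rcases eq_or_ne (X' : Pt) p with h5 | h5
          · exact Or.inl h5
          · exact Or.inr hX'
        rcases hor with ⟨h3, h4⟩ | ⟨h3, h4⟩
        · exact iff_of_true (Or.inl h3) (hX'ok _ h4)
        · exact iff_of_true (hX'ok _ h3) (Or.inl h4)
      · rw [Sym2.eq_iff] at h2
        have hor : ((a : Pt) = q ∧ (b : Pt) = ↑Y') ∨ ((a : Pt) = ↑Y' ∧ (b : Pt) = q) := by
          rcases h2 with ⟨h3, h4⟩ | ⟨h3, h4⟩
          · exact Or.inl ⟨congrArg Subtype.val h3, congrArg Subtype.val h4⟩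
          · exact Or.inr ⟨congrArg Subtype.val h3, congrArg Subtype.val h4⟩
        have hqnp : ¬ ((q : Pt) = p ∨ leftOf p q q) := by
          rintro (h5 | h5)
          · exact hpq h5.symm
          · exact not_leftOf_self_q h5
        have hY'np : ¬ (((Y' : Pt)) = p ∨ leftOf p q ↑Y') := by
          rintro (h5 | h5)
          · exact (rightOf_ne_p hY') h5
          · exact not_left_and_right h5 hY'
        rcases hor with ⟨h3, h4⟩ | ⟨h3, h4⟩
        · rw [h3, h4]; exact iff_of_false hqnp hY'np
        · rw [h3, h4]; exact iff_of_false hY'np hqnp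
    have hvw' : ((v : Pt) = p ∧ (w : Pt) = q) ∨ ((v : Pt) = q ∧ (w : Pt) = p) := by
      rw [Sym2.eq_iff] at h
      rcases h with ⟨h3, h4⟩ | ⟨h3, h4⟩
      · exact Or.inl ⟨congrArg Subtype.val h3, congrArg Subtype.val h4⟩
      · exact Or.inr ⟨congrArg Subtype.val h3, congrArg Subtype.val h4⟩
    have := reach_invariant hinv hr
    rcases hvw' with ⟨h3, h4⟩ | ⟨h3, h4⟩ <;> rw [h3, h4] at this
    · exact absurd (this.1 (Or.inl rfl)) (by
        rintro (h5 | h5)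
        · exact hpq h5.symm
        · exact not_leftOf_self_q h5)
    · exact absurd (this.2 (Or.inl rfl)) (by
        rintro (h5 | h5)
        · exact hpq h5.symm
        · exact not_leftOf_self_q h5)
  · -- edge p-X removed : X becomes isolated
    intro hr
    have hinv : ∀ a b : V, G'.Adj a b → ((a = X) ↔ (b = X)) := by
      intro a b hab
      obtain ⟨hab, hne⟩ := hG'le a b hab
      have hne' : s(a, b) ≠ s((⟨p, hp⟩ : V), X) := h ▸ hne
      constructor
      · rintro rfl
        exfalso
        have := doubleStar_unique_nbr_left hp hq hX hab.symm
        rw [this] at hab hne'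
        exact hne' (Sym2.eq_swap)
      · rintro rfl
        exfalso
        have := doubleStar_unique_nbr_left hp hq hX hab
        rw [this] at hne'
        exact hne' rfl
    have hvw' : (v = ⟨p, hp⟩ ∧ w = X) ∨ (v = X ∧ w = ⟨p, hp⟩) := by
      rw [Sym2.eq_iff] at h
      tauto
    have := reach_invariant hinv hr
    have hXp : X ≠ ⟨p, hp⟩ := fun h5 => (leftOf_ne_p hX) (congrArg Subtype.val h5)
    rcases hvw' with ⟨h3, h4⟩ | ⟨h3, h4⟩ <;> rw [h3, h4] at this
    · exact hXp (this.2 rfl).symm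
    · exact hXp (this.1 rfl).symm
  · -- edge q-Y removed : Y becomes isolated
    intro hr
    have hinv : ∀ a b : V, G'.Adj a b → ((a = Y) ↔ (b = Y)) := by
      intro a b hab
      obtain ⟨hab, hne⟩ := hG'le a b hab
      have hne' : s(a, b) ≠ s((⟨q, hq⟩ : V), Y) := h ▸ hne
      constructor
      · rintro rfl
        exfalso
        have := doubleStar_unique_nbr_right hp hq hY hab.symm
        rw [this] at hab hne'
        exact hne' (Sym2.eq_swap)
      · rintro rfl
        exfalso
        have := doubleStar_unique_nbr_right hp hq hY hab
        rw [this] at hne'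
        exact hne' rfl
    have hvw' : (v = ⟨q, hq⟩ ∧ w = Y) ∨ (v = Y ∧ w = ⟨q, hq⟩) := by
      rw [Sym2.eq_iff] at h
      tauto
    have := reach_invariant hinv hr
    have hYq : Y ≠ ⟨q, hq⟩ := fun h5 => (rightOf_ne_q hY) (congrArg Subtype.val h5)
    rcases hvw' with ⟨h3, h4⟩ | ⟨h3, h4⟩ <;> rw [h3, h4] at this
    · exact hYq (this.2 rfl).symm
    · exact hYq (this.1 rfl).symm

lemma doubleStar_isPlaneSpanningTree (hp : p ∈ S) (hq : q ∈ S) (hpq : p ≠ q) (hgp : GenPos S) :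
    IsPlaneSpanningTree (doubleStar S p q) :=
  ⟨⟨doubleStar_connected hp hq hpq hgp, doubleStar_acyclic hp hq hpq hgp⟩,
    doubleStar_plane hp hq hpq hgp⟩

end DS3

section DS4

variable {S : Finset Pt} {p q p' q' : Pt}

lemma doubleStar_edgeDisjoint (hp : p ∈ S) (hq : q ∈ S) (hp' : p' ∈ S) (hq' : q' ∈ S)
    (h1 : rightOf p q p') (h2 : leftOf p q q') (h3 : leftOf p' q' p) (h4 : rightOf p' q' q) :
    Disjoint (doubleStar S p q).edgeSet (doubleStar S p' q').edgeSet := by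
  rw [Set.disjoint_left]
  intro e he1 he2
  induction e with
  | _ a b =>
  rw [SimpleGraph.mem_edgeSet] at he1 he2
  have c1 := doubleStar_adj_cases hp hq he1
  have c2 := doubleStar_adj_cases hp' hq' he2
  rcases c1 with h5 | ⟨X, hX, h5⟩ | ⟨Y, hY, h5⟩ <;>
    rcases c2 with h6 | ⟨X', hX', h6⟩ | ⟨Y', hY', h6⟩ <;>
    (have h7 := h5.symm.trans h6; rw [Sym2.eq_iff] at h7)
  · rcases h7 with ⟨e1, e2⟩ | ⟨e1, e2⟩
    · rw [← show p = p' from congrArg Subtype.val e1] at h1; exact not_rightOf_self_p h1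
    · rw [← show p = q' from congrArg Subtype.val e1] at h2; exact not_leftOf_self_p h2
  · rcases h7 with ⟨e1, e2⟩ | ⟨e1, e2⟩
    · rw [← show p = p' from congrArg Subtype.val e1] at h1; exact not_rightOf_self_p h1
    · rw [← show q = p' from congrArg Subtype.val e2] at h1; exact not_rightOf_self_q h1
  · rcases h7 with ⟨e1, e2⟩ | ⟨e1, e2⟩
    · rw [← show p = q' from congrArg Subtype.val e1] at h2; exact not_leftOf_self_p h2
    · rw [← show q = q' from congrArg Subtype.val e2] at h2; exact not_leftOf_self_q h2
  · rcases h7 with ⟨e1, e2⟩ | ⟨e1, e2⟩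
    · rw [← show p = p' from congrArg Subtype.val e1] at h1; exact not_rightOf_self_p h1
    · rw [← show p = q' from congrArg Subtype.val e1] at h2; exact not_leftOf_self_p h2
  · rcases h7 with ⟨e1, e2⟩ | ⟨e1, e2⟩
    · rw [← show p = p' from congrArg Subtype.val e1] at h1; exact not_rightOf_self_p h1
    · rw [show (X : Pt) = p' from congrArg Subtype.val e2] at hX
      exact not_left_and_right hX h1
  · rcases h7 with ⟨e1, e2⟩ | ⟨e1, e2⟩
    · rw [← show p = q' from congrArg Subtype.val e1] at h2; exact not_leftOf_self_p h2
    · rw [← show p = (Y' : Pt) from congrArg Subtype.val e1] at hY'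
      exact not_left_and_right h3 hY'
  · rcases h7 with ⟨e1, e2⟩ | ⟨e1, e2⟩
    · rw [← show q = p' from congrArg Subtype.val e1] at h1; exact not_rightOf_self_q h1
    · rw [← show q = q' from congrArg Subtype.val e1] at h2; exact not_leftOf_self_q h2
  · rcases h7 with ⟨e1, e2⟩ | ⟨e1, e2⟩
    · rw [← show q = p' from congrArg Subtype.val e1] at h1; exact not_rightOf_self_q h1
    · rw [← show q = (X' : Pt) from congrArg Subtype.val e1] at hX'
      exact not_left_and_right hX' h4
  · rcases h7 with ⟨e1, e2⟩ | ⟨e1, e2⟩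
    · rw [← show q = q' from congrArg Subtype.val e1] at h2; exact not_leftOf_self_q h2
    · rw [show (Y : Pt) = q' from congrArg Subtype.val e2] at hY
      exact not_left_and_right h2 hY

end DS4

section Order

/-- `x` is lexicographically greater than `o`. -/
def Reg (o x : Pt) : Prop := o.1 < x.1 ∨ (o.1 = x.1 ∧ o.2 < x.2)

lemma Reg.fst_le {o x : Pt} (h : Reg o x) : o.1 ≤ x.1 := by
  rcases h with h | ⟨h, _⟩ <;> [exact le_of_lt h; exact le_of_eq h]

lemma cross_o_trans {o x y z : Pt} (hrx : Reg o x) (hry : Reg o y) (hrz : Reg o z)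
    (hxy : 0 < cross o x y) (hyz : 0 < cross o y z) : 0 < cross o x z := by
  simp only [cross] at hxy hyz ⊢
  rcases eq_or_lt_of_le hry.fst_le with hv1 | hv1
  · -- y.1 = o.1, so y.2 > o.2 ; then hyz forces z.1 < o.1, contradiction
    have hv2 : o.2 < y.2 := by
      rcases hry with h | ⟨_, h⟩ <;> [exact absurd hv1 (ne_of_lt h); exact h]
    have e0 : (y.1 - o.1) * (z.2 - o.2) = 0 := by
      rw [show y.1 - o.1 = 0 by linarith, zero_mul]
    nlinarith [mul_nonneg (by linarith : (0:ℝ) ≤ y.2 - o.2)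
      (by linarith [hrz.fst_le] : (0:ℝ) ≤ z.1 - o.1), e0]
  · rcases eq_or_lt_of_le hrx.fst_le with hu1 | hu1
    · -- x.1 = o.1, x.2 > o.2, hxy forces y.1 < o.1 contradiction
      have hu2 : o.2 < x.2 := by
        rcases hrx with h | ⟨_, h⟩ <;> [exact absurd hu1 (ne_of_lt h); exact h]
      have e0 : (x.1 - o.1) * (y.2 - o.2) = 0 := by
        rw [show x.1 - o.1 = 0 by linarith, zero_mul]
      nlinarith [mul_pos (by linarith : (0:ℝ) < x.2 - o.2) (by linarith : (0:ℝ) < y.1 - o.1), e0]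
    · rcases eq_or_lt_of_le hrz.fst_le with hw1 | hw1
      · -- z.1 = o.1, z.2 > o.2 : conclusion is x1*... positive
        have hw2 : o.2 < z.2 := by
          rcases hrz with h | ⟨_, h⟩ <;> [exact absurd hw1 (ne_of_lt h); exact h]
        have e0 : (x.2 - o.2) * (z.1 - o.1) = 0 := by
          rw [show z.1 - o.1 = 0 by linarith, mul_zero]
        nlinarith [mul_pos (by linarith : (0:ℝ) < x.1 - o.1) (by linarith : (0:ℝ) < z.2 - o.2), e0]
      · have hu1' : (0:ℝ) < x.1 - o.1 := by linarith
        have hv1' : (0:ℝ) < y.1 - o.1 := by linarith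
        have hw1' : (0:ℝ) < z.1 - o.1 := by linarith
        nlinarith [mul_pos hu1' hyz, mul_pos hw1' hxy, hv1']

lemma convex_contra {o x y z : Pt} {D : Finset Pt}
    (ho : o ∈ D) (hx : x ∈ D) (hy : y ∈ D) (hz : z ∈ D)
    (hox : o ≠ x) (hoy : o ≠ y) (hoz : o ≠ z) (hxy' : x ≠ y) (hyz' : y ≠ z)
    (hind : ∀ w ∈ D, w ∉ convexHull ℝ ((D : Set Pt) \ {w}))
    (hxy : 0 < cross o x y) (hyz : 0 < cross o y z) (hxz : 0 < cross o x z)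
    (hneg : cross x y z < 0) : False := by
  set Dt := cross o x z with hDt
  have hDtpos : 0 < Dt := hxz
  set a := cross o y z / Dt with ha
  set c := cross o x y / Dt with hc
  set d := (- cross x y z) / Dt with hd
  have hapos : 0 < a := div_pos hyz hDtpos
  have hcpos : 0 < c := div_pos hxy hDtpos
  have hdpos : 0 < d := div_pos (by linarith) hDtpos
  have hsum : a + c + d = 1 := by
    have hkey : cross o y z + cross o x y + (- cross x y z) = Dt := by
      simp only [hDt, cross]; ring
    rw [ha, hc, hd, ← add_div, ← add_div, hkey, div_self (ne_of_gt hDtpos)]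
  have hcomb : y = a • x + c • z + d • o := by
    have h1 : Dt • y = cross o y z • x + cross o x y • z + (- cross x y z) • o := by
      apply Prod.ext <;>
        simp only [Prod.smul_fst, Prod.smul_snd, Prod.fst_add, Prod.snd_add, smul_eq_mul,
          cross, hDt] <;> ring
    have h2 : a • x + c • z + d • o = Dt⁻¹ • (Dt • y) := by
      rw [h1]
      simp only [ha, hc, hd, div_eq_inv_mul, mul_smul, smul_add]
    rw [h2, smul_smul, inv_mul_cancel₀ (ne_of_gt hDtpos), one_smul]
  -- y is in the convex hull of the others
  have hmem : y ∈ convexHull ℝ ((D : Set Pt) \ {y}) := by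
    have hsub : ({x, z, o} : Set Pt) ⊆ (D : Set Pt) \ {y} := by
      rintro w (rfl | rfl | rfl)
      · exact ⟨hx, fun h => hxy' (Set.mem_singleton_iff.1 h)⟩
      · exact ⟨hz, fun h => hyz' (Set.mem_singleton_iff.1 h).symm⟩
      · exact ⟨ho, fun h => hoy (Set.mem_singleton_iff.1 h)⟩
    apply convexHull_mono hsub
    have cvx := convex_convexHull ℝ ({x, z, o} : Set Pt)
    have hxm : x ∈ convexHull ℝ ({x, z, o} : Set Pt) :=
      subset_convexHull ℝ _ (by simp)
    have hzm : z ∈ convexHull ℝ ({x, z, o} : Set Pt) :=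
      subset_convexHull ℝ _ (by simp)
    have hom : o ∈ convexHull ℝ ({x, z, o} : Set Pt) :=
      subset_convexHull ℝ _ (by simp)
    have hac : (0:ℝ) < a + c := by linarith
    have hw : (a/(a+c)) • x + (c/(a+c)) • z ∈ convexHull ℝ ({x, z, o} : Set Pt) :=
      cvx hxm hzm (le_of_lt (div_pos hapos hac)) (le_of_lt (div_pos hcpos hac))
        (by rw [← add_div, div_self (ne_of_gt hac)])
    have hy2 : (a+c) • ((a/(a+c)) • x + (c/(a+c)) • z) + d • o ∈
        convexHull ℝ ({x, z, o} : Set Pt) :=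
      cvx hw hom (le_of_lt hac) (le_of_lt hdpos) (by linarith)
    have : (a+c) • ((a/(a+c)) • x + (c/(a+c)) • z) + d • o = a • x + c • z + d • o := by
      rw [smul_add, smul_smul, smul_smul, mul_div_cancel₀ _ (ne_of_gt hac),
        mul_div_cancel₀ _ (ne_of_gt hac)]
    rw [this] at hy2
    rw [hcomb]
    exact hy2
  exact hind y hy hmem

end Order

section CCW

lemma exists_ccw {S D : Finset Pt} (hDS : D ⊆ S) (hgp : GenPos S)
    (hind : ∀ w ∈ D, w ∉ convexHull ℝ ((D : Set Pt) \ {w})) {N : ℕ} (hN : D.card = N)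
    (hN1 : 1 ≤ N) :
    ∃ v : ℕ → Pt, (∀ k, k < N → v k ∈ D) ∧
      (∀ k l, k < N → l < N → v k = v l → k = l) ∧
      (∀ a b c, a < b → b < c → c < N → 0 < cross (v a) (v b) (v c)) := by
  classical
  have hDne : D.Nonempty := Finset.card_pos.1 (by omega)
  -- lexicographic minimum o
  obtain ⟨o, ho, hominimal⟩ : ∃ o ∈ D, ∀ x ∈ D, x ≠ o → Reg o x := by
    have hfs : (D.image Prod.fst).Nonempty := hDne.image _
    set xm := (D.image Prod.fst).min' hfs with hxm
    have hD0ne : (D.filter (fun z => z.1 = xm)).Nonempty := by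
      obtain ⟨w, hw, hw1⟩ := Finset.mem_image.1 ((D.image Prod.fst).min'_mem hfs)
      exact ⟨w, Finset.mem_filter.2 ⟨hw, hw1⟩⟩
    set D0 := D.filter (fun z => z.1 = xm) with hD0
    have hss : (D0.image Prod.snd).Nonempty := hD0ne.image _
    set ym := (D0.image Prod.snd).min' hss with hym
    obtain ⟨w', hw', hw'2⟩ := Finset.mem_image.1 ((D0.image Prod.snd).min'_mem hss)
    have hw'D : w' ∈ D := (Finset.mem_filter.1 hw').1
    have hw'1 : w'.1 = xm := (Finset.mem_filter.1 hw').2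
    refine ⟨w', hw'D, ?_⟩
    intro x hx hxo
    have hx1 : xm ≤ x.1 := Finset.min'_le _ _ (Finset.mem_image_of_mem _ hx)
    rcases eq_or_lt_of_le hx1 with h1 | h1
    · have hxD0 : x ∈ D0 := Finset.mem_filter.2 ⟨hx, h1.symm⟩
      have hx2 : ym ≤ x.2 := Finset.min'_le _ _ (Finset.mem_image_of_mem _ hxD0)
      rcases eq_or_lt_of_le hx2 with h2 | h2
      · exact absurd (Prod.ext (by rw [hw'1, ← h1]) (by rw [hw'2, ← h2])) hxo
      · exact Or.inr ⟨by rw [hw'1, ← h1], by rw [hw'2]; exact h2⟩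
    · exact Or.inl (by rw [hw'1]; exact h1)
  set E := D.erase o with hE
  have hEcard : E.card = N - 1 := by rw [hE, Finset.card_erase_of_mem ho, hN]
  have hED : ∀ z : Pt, z ∈ E → z ∈ D := fun z hz => Finset.mem_of_mem_erase hz
  have hEno : ∀ z : Pt, z ∈ E → z ≠ o := fun z hz => Finset.ne_of_mem_erase hz
  have hregE : ∀ z : Pt, z ∈ E → Reg o z := fun z hz => hominimal z (hED z hz) (hEno z hz)
  have hne0 : ∀ a b : Pt, a ∈ E → b ∈ E → a ≠ b → cross o a b ≠ 0 := by
    intro a b ha hb hab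
    exact genpos_cross_ne hgp (hDS ho) (hDS (hED a ha)) (hDS (hED b hb))
      (Ne.symm (hEno a ha)) (Ne.symm (hEno b hb)) hab
  have hanti : ∀ a b : Pt, 0 < cross o a b → 0 < cross o b a → False := by
    intro a b h1 h2
    have : cross o b a = - cross o a b := by simp only [cross]; ring
    rw [this] at h2; linarith
  -- the sorting relation on the subtype
  set r : {z // z ∈ E} → {z // z ∈ E} → Prop := fun a b => a = b ∨ 0 < cross o ↑a ↑b with hr
  haveI : DecidableRel r := Classical.decRel _
  haveI : IsTrans {z // z ∈ E} r := by
    constructor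
    rintro a b c (rfl | hab) hbc
    · exact hbc
    · rcases hbc with rfl | hbc
      · exact Or.inr hab
      · exact Or.inr (cross_o_trans (hregE _ a.2) (hregE _ b.2) (hregE _ c.2) hab hbc)
  haveI : IsAntisymm {z // z ∈ E} r := by
    constructor
    rintro a b (rfl | hab) hba
    · rfl
    · rcases hba with rfl | hba
      · rfl
      · exact absurd hba (fun h => hanti _ _ hab h)
  haveI : IsTotal {z // z ∈ E} r := by
    constructor
    intro a b
    rcases eq_or_ne a b with rfl | hab
    · exact Or.inl (Or.inl rfl)
    · have := hne0 ↑a ↑b a.2 b.2 (fun h => hab (Subtype.ext h))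
      rcases lt_or_gt_of_ne this with h | h
      · refine Or.inr (Or.inr ?_)
        have : cross o ↑b ↑a = - cross o ↑a ↑b := by simp only [cross]; ring
        rw [this]; linarith
      · exact Or.inl (Or.inr h)
  set l' := Finset.sort Finset.univ r with hl'
  have hl'sorted : List.Pairwise r l' := Finset.pairwise_sort _ r
  have hl'nodup : l'.Nodup := Finset.sort_nodup _ r
  have hl'len : l'.length = N - 1 := by
    rw [hl', Finset.length_sort, Finset.card_univ, Fintype.card_coe, hEcard]
  set L : List Pt := o :: l'.map Subtype.val with hL
  have hLlen : L.length = N := by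
    rw [hL, List.length_cons, List.length_map, hl'len]; omega
  have hLnodup : L.Nodup := by
    rw [hL, List.nodup_cons]
    constructor
    · intro hmem
      obtain ⟨a, _, ha2⟩ := List.mem_map.1 hmem
      exact hEno ↑a a.2 ha2
    · exact hl'nodup.map Subtype.val_injective
  refine ⟨fun k => L.getD k ((0:ℝ), (0:ℝ)), ?_, ?_, ?_⟩
  · intro k hk
    have hk' : k < L.length := by rw [hLlen]; exact hk
    simp only [List.getD_eq_getElem _ _ hk']
    have hmem : L[k] ∈ o :: l'.map Subtype.val := List.getElem_mem hk'
    rcases List.mem_cons.1 hmem with h | h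
    · rw [h]; exact ho
    · obtain ⟨a, _, ha2⟩ := List.mem_map.1 h
      rw [← ha2]; exact hED _ a.2
  · intro k l hk hl hkl
    have hk' : k < L.length := by rw [hLlen]; exact hk
    have hl' : l < L.length := by rw [hLlen]; exact hl
    simp only [List.getD_eq_getElem _ _ hk', List.getD_eq_getElem _ _ hl'] at hkl
    have h9 := List.nodup_iff_injective_get.1 hLnodup
      (show L.get ⟨k, hk'⟩ = L.get ⟨l, hl'⟩ by simpa using hkl)
    exact congrArg Fin.val h9
  · intro a b c hab hbc hcN
    have haN : a < N := by omega
    have hbN : b < N := by omega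
    have ha' : a < L.length := by rw [hLlen]; exact haN
    have hb' : b < L.length := by rw [hLlen]; exact hbN
    have hc' : c < L.length := by rw [hLlen]; exact hcN
    simp only [List.getD_eq_getElem _ _ ha', List.getD_eq_getElem _ _ hb',
      List.getD_eq_getElem _ _ hc']
    -- helper: entries with positive index come from l'
    have hidx : ∀ (j : ℕ) (hj : j + 1 < L.length) (hj' : j < l'.length),
        L[j + 1] = ↑(l'.get ⟨j, hj'⟩) := by
      intro j hj hj'
      show (o :: l'.map Subtype.val)[j + 1]'hj = ↑(l'.get ⟨j, hj'⟩)
      simp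
    have hval : ∀ (j : ℕ) (hj : j < (o :: l'.map Subtype.val).length)
        (hj' : j - 1 < l'.length), 0 < j →
        (o :: l'.map Subtype.val)[j] = ↑(l'.get ⟨j - 1, hj'⟩) := by
      intro j hj hj' hjpos
      obtain ⟨j', rfl⟩ : ∃ j'', j = j'' + 1 := ⟨j - 1, by omega⟩
      exact hidx j' hj hj'
    have hsortpos : ∀ (i j : ℕ) (hi : i < l'.length) (hj : j < l'.length), i < j →
        0 < cross o ↑(l'.get ⟨i, hi⟩) ↑(l'.get ⟨j, hj⟩) := by
      intro i j hi hj hij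
      have hrel := hl'sorted.rel_get_of_lt (show (⟨i, hi⟩ : Fin l'.length) < ⟨j, hj⟩ from hij)
      rcases hrel with heq | hpos
      · exfalso
        have := List.nodup_iff_injective_get.1 hl'nodup heq
        rw [Fin.mk.injEq] at this
        omega
      · exact hpos
    rcases Nat.eq_zero_or_pos a with rfl | hapos
    · -- a = 0 : the base point o
      have hb1 : b - 1 < l'.length := by rw [hl'len]; omega
      have hc1 : c - 1 < l'.length := by rw [hl'len]; omega
      have hbeq : L[b]'hb' = ↑(l'.get ⟨b - 1, hb1⟩) := hval b hb' hb1 (by omega)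
      have hceq : L[c]'hc' = ↑(l'.get ⟨c - 1, hc1⟩) := hval c hc' hc1 (by omega)
      have h0 : L[0]'ha' = o := rfl
      rw [h0, hbeq, hceq]
      exact hsortpos _ _ hb1 hc1 (by omega)
    · -- a ≥ 1 : use convexity
      have ha1 : a - 1 < l'.length := by rw [hl'len]; omega
      have hb1 : b - 1 < l'.length := by rw [hl'len]; omega
      have hc1 : c - 1 < l'.length := by rw [hl'len]; omega
      have haeq : L[a]'ha' = ↑(l'.get ⟨a - 1, ha1⟩) := hval a ha' ha1 (by omega)
      have hbeq : L[b]'hb' = ↑(l'.get ⟨b - 1, hb1⟩) := hval b hb' hb1 (by omega)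
      have hceq : L[c]'hc' = ↑(l'.get ⟨c - 1, hc1⟩) := hval c hc' hc1 (by omega)
      rw [haeq, hbeq, hceq]
      set x := (↑(l'.get ⟨a - 1, ha1⟩) : Pt) with hxdef
      set y := (↑(l'.get ⟨b - 1, hb1⟩) : Pt) with hydef
      set z := (↑(l'.get ⟨c - 1, hc1⟩) : Pt) with hzdef
      have hxE : x ∈ E := (l'.get ⟨a - 1, ha1⟩).2
      have hyE : y ∈ E := (l'.get ⟨b - 1, hb1⟩).2
      have hzE : z ∈ E := (l'.get ⟨c - 1, hc1⟩).2
      have hoxy : 0 < cross o x y := hsortpos _ _ ha1 hb1 (by omega)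
      have hoyz : 0 < cross o y z := hsortpos _ _ hb1 hc1 (by omega)
      have hoxz : 0 < cross o x z := hsortpos _ _ ha1 hc1 (by omega)
      have hxy : x ≠ y := by
        intro h
        have := List.nodup_iff_injective_get.1 hl'nodup (Subtype.ext h)
        rw [Fin.mk.injEq] at this
        omega
      have hyz : y ≠ z := by
        intro h
        have := List.nodup_iff_injective_get.1 hl'nodup (Subtype.ext h)
        rw [Fin.mk.injEq] at this
        omega
      have hxz : x ≠ z := by
        intro h
        have := List.nodup_iff_injective_get.1 hl'nodup (Subtype.ext h)
        rw [Fin.mk.injEq] at this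
        omega
      have hne : cross x y z ≠ 0 :=
        genpos_cross_ne hgp (hDS (hED x hxE)) (hDS (hED y hyE)) (hDS (hED z hzE)) hxy hxz hyz
      rcases lt_or_gt_of_ne hne with hneg | hpos
      · exact absurd (convex_contra ho (hED x hxE) (hED y hyE) (hED z hzE)
          (Ne.symm (hEno x hxE)) (Ne.symm (hEno y hyE)) (Ne.symm (hEno z hzE)) hxy hyz
          hind hoxy hoyz hoxz hneg) (fun h => h)
      · exact hpos

end CCW

/-- If `h` points of `S` are in convex position, then `S` admits at least
`⌊h/2⌋` pairwise edge-disjoint plane spanning trees. -/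
theorem convex_subset_gives_trees (S C : Finset Pt) (n h : ℕ)
    (hS : S.card = n) (hgp : GenPos S) (hCS : C ⊆ S) (hC : C.card = h)
    (hconv : ConvexIndependent ℝ (fun x : (C : Set Pt) => (x : Pt))) :
    ∃ T : Fin (h / 2) → SimpleGraph {x // x ∈ S},
      (∀ i, IsPlaneSpanningTree (T i)) ∧
      (∀ i j, i ≠ j → Disjoint (T i).edgeSet (T j).edgeSet) := by
  classical
  rcases Nat.eq_zero_or_pos (h / 2) with hm0 | hmpos
  · exact ⟨fun i => (Nat.not_lt_zero i.1 (hm0 ▸ i.isLt)).elim,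
      fun i => (Nat.not_lt_zero i.1 (hm0 ▸ i.isLt)).elim,
      fun i _ _ => (Nat.not_lt_zero i.1 (hm0 ▸ i.isLt)).elim⟩
  set m := h / 2 with hmdef
  have h2m : 2 * m ≤ h := by omega
  obtain ⟨D, hDC, hDcard⟩ := Finset.exists_subset_card_eq (s := C) (n := 2 * m) (by rw [hC]; exact h2m)
  have hDS : D ⊆ S := fun x hx => hCS (hDC hx)
  have hCind : ∀ x ∈ (C : Set Pt), x ∉ convexHull ℝ ((C : Set Pt) \ {x}) :=
    convexIndependent_set_iff_notMem_convexHull_sdiff.1 hconv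
  have hind : ∀ w ∈ D, w ∉ convexHull ℝ ((D : Set Pt) \ {w}) := by
    intro w hw hmem
    exact hCind w (hDC hw)
      (convexHull_mono (Set.diff_subset_diff_left (Finset.coe_subset.2 hDC)) hmem)
  obtain ⟨v, hvD, hvinj, hvccw⟩ := exists_ccw hDS hgp hind hDcard (by omega)
  have hvS : ∀ k, k < 2 * m → v k ∈ S := fun k hk => hDS (hvD k hk)
  have hvne : ∀ k l, k < 2 * m → l < 2 * m → k ≠ l → v k ≠ v l := by
    intro k l hk hl hkl he
    exact hkl (hvinj k l hk hl he)
  refine ⟨fun i => doubleStar S (v i.1) (v (i.1 + m)), ?_, ?_⟩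
  · intro i
    have hi : i.1 < m := i.isLt
    exact doubleStar_isPlaneSpanningTree (hvS _ (by omega)) (hvS _ (by omega))
      (hvne _ _ (by omega) (by omega) (by omega)) hgp
  · have key : ∀ i j : Fin m, i.1 < j.1 →
        Disjoint (doubleStar S (v i.1) (v (i.1 + m))).edgeSet
          (doubleStar S (v j.1) (v (j.1 + m))).edgeSet := by
      intro i j hij
      have hi : i.1 < m := i.isLt
      have hj : j.1 < m := j.isLt
      set a := i.1
      set b := j.1
      have h1 : rightOf (v a) (v (a + m)) (v b) := by
        rw [rightOf_iff]
        have hpos := hvccw a b (a + m) hij (by omega) (by omega)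
        rw [cross_swap (v a) (v b) (v (a + m))]
        linarith
      have h2 : leftOf (v a) (v (a + m)) (v (b + m)) := by
        rw [leftOf_iff]
        exact hvccw a (a + m) (b + m) (by omega) (by omega) (by omega)
      have h3 : leftOf (v b) (v (b + m)) (v a) := by
        rw [leftOf_iff, ← cross_cyclic (v a) (v b) (v (b + m))]
        exact hvccw a b (b + m) hij (by omega) (by omega)
      have h4 : rightOf (v b) (v (b + m)) (v (a + m)) := by
        rw [rightOf_iff]
        have hpos := hvccw b (a + m) (b + m) (by omega) (by omega) (by omega)
        rw [cross_swap (v b) (v (a + m)) (v (b + m))]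
        linarith
      exact doubleStar_edgeDisjoint (hvS _ (by omega)) (hvS _ (by omega)) (hvS _ (by omega))
        (hvS _ (by omega)) h1 h2 h3 h4
    intro i j hij
    rcases lt_trichotomy i.1 j.1 with h | h | h
    · exact key i j h
    · exact absurd (Fin.ext h) hij
    · exact (key j i h).symm
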